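/- Let t > 0 and let a : ℕ → ℝ be a nonnegative sequence with ∑_n a(n)² < ∞. Then ∑_{n=0}^∞ √n · e^{−nt} · a(n) ≤ (e^{−t}/(1 − e^{−2t})) · (∑_{n=0}^∞ a(n)²)^{1/2}, and consequently ∑_{n=0}^∞ √n · e^{−nt} · a(n) ≤ (1/(2t)) · (∑_{n=0}^∞ a(n)²)^{1/2}. -/
import Mathlib

private lemma cs_tsum (b a : ℕ → ℝ) (hb : ∀ n, 0 ≤ b n) (ha : ∀ n, 0 ≤ a n)
    (hb2 : Summable (fun n => b n ^ 2)) (ha2 : Summable (fun n => a n ^ 2)) :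
    Summable (fun n => b n * a n) ∧
    (∑' n, b n * a n) ≤ Real.sqrt (∑' n, b n ^ 2) * Real.sqrt (∑' n, a n ^ 2) := by
  have hsum : Summable (fun n => b n * a n) := by
    have hle : ∀ n, b n * a n ≤ (b n ^ 2 + a n ^ 2) / 2 := fun n => by
      nlinarith [sq_nonneg (b n - a n)]
    have hg : Summable (fun n => (b n ^ 2 + a n ^ 2) / 2) := (hb2.add ha2).div_const 2
    exact Summable.of_nonneg_of_le (fun n => mul_nonneg (hb n) (ha n)) hle hg
  refine ⟨hsum, Summable.tsum_le_of_sum_le hsum fun s => ?_⟩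
  calc ∑ n ∈ s, b n * a n
      ≤ Real.sqrt (∑ n ∈ s, b n ^ 2) * Real.sqrt (∑ n ∈ s, a n ^ 2) :=
        Real.sum_mul_le_sqrt_mul_sqrt s b a
    _ ≤ Real.sqrt (∑' n, b n ^ 2) * Real.sqrt (∑' n, a n ^ 2) := by
        gcongr
        · exact Summable.sum_le_tsum s (fun n _ => sq_nonneg _) hb2
        · exact Summable.sum_le_tsum s (fun n _ => sq_nonneg _) ha2

/-- The analytic core of strong ultracontractivity: for `t > 0` and a nonnegative
square-summable sequence `a`,
`∑ √n e^{-nt} a(n) ≤ (e^{-t}/(1-e^{-2t})) ‖a‖₂ ≤ (1/(2t)) ‖a‖₂`. -/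
theorem strong_ultracontractivity_core (t : ℝ) (ht : 0 < t)
    (a : ℕ → ℝ) (ha : ∀ n, 0 ≤ a n)
    (hsum : Summable (fun n => a n ^ 2)) :
    Summable (fun n : ℕ => Real.sqrt (n : ℝ) * Real.exp (-(n : ℝ) * t) * a n) ∧
    (∑' n : ℕ, Real.sqrt (n : ℝ) * Real.exp (-(n : ℝ) * t) * a n) ≤
      Real.exp (-t) / (1 - Real.exp (-2 * t)) * Real.sqrt (∑' n, a n ^ 2) ∧
    (∑' n : ℕ, Real.sqrt (n : ℝ) * Real.exp (-(n : ℝ) * t) * a n) ≤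
      1 / (2 * t) * Real.sqrt (∑' n, a n ^ 2) := by
  set b : ℕ → ℝ := fun n => Real.sqrt (n : ℝ) * Real.exp (-(n : ℝ) * t) with hbdef
  set r : ℝ := Real.exp (-2 * t) with hrdef
  have hr0 : 0 < r := Real.exp_pos _
  have hr1 : r < 1 := by
    rw [hrdef, Real.exp_lt_one_iff]; linarith
  have hbsq : ∀ n, b n ^ 2 = (n : ℝ) * r ^ n := by
    intro n
    rw [hbdef]
    simp only
    rw [mul_pow, Real.sq_sqrt (Nat.cast_nonneg n), ← Real.exp_nat_mul, ← Real.exp_nat_mul]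
    ring_nf
  have hb2 : Summable (fun n => b n ^ 2) := by
    simp only [hbsq]
    exact_mod_cast summable_pow_mul_geometric_of_norm_lt_one 1 (by
      rwa [Real.norm_eq_abs, abs_of_pos hr0]) |>.congr (by intro n; simp)
  have htsumb : (∑' n, b n ^ 2) = r / (1 - r) ^ 2 := by
    simp only [hbsq]
    exact_mod_cast tsum_coe_mul_geometric_of_norm_lt_one (𝕜 := ℝ)
      (by rwa [Real.norm_eq_abs, abs_of_pos hr0])
  have hb0 : ∀ n, 0 ≤ b n := fun n =>
    mul_nonneg (Real.sqrt_nonneg _) (Real.exp_pos _).le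
  obtain ⟨hS, hCS⟩ := cs_tsum b a hb0 ha hb2 hsum
  have hsqrtb : Real.sqrt (∑' n, b n ^ 2) = Real.exp (-t) / (1 - r) := by
    have h1r : 0 < 1 - r := by linarith
    have hre : r = Real.exp (-t) ^ 2 := by
      rw [hrdef, sq, ← Real.exp_add]
      ring_nf
    rw [htsumb, Real.sqrt_div hr0.le, Real.sqrt_sq h1r.le, hre,
      Real.sqrt_sq (Real.exp_pos _).le]
  have key : (∑' n : ℕ, Real.sqrt (n : ℝ) * Real.exp (-(n : ℝ) * t) * a n) ≤
      Real.exp (-t) / (1 - Real.exp (-2 * t)) * Real.sqrt (∑' n, a n ^ 2) := by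
    calc (∑' n : ℕ, Real.sqrt (n : ℝ) * Real.exp (-(n : ℝ) * t) * a n)
        = ∑' n, b n * a n := rfl
      _ ≤ Real.sqrt (∑' n, b n ^ 2) * Real.sqrt (∑' n, a n ^ 2) := hCS
      _ = Real.exp (-t) / (1 - Real.exp (-2 * t)) * Real.sqrt (∑' n, a n ^ 2) := by
          rw [hsqrtb]
  refine ⟨hS, key, key.trans ?_⟩
  gcongr ?_ * _
  have hsinh : 2 * t < Real.exp t - Real.exp (-t) := by
    have := Real.self_lt_sinh_iff.mpr ht
    rw [Real.sinh_eq] at this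
    linarith
  have heq : Real.exp (-t) / (1 - Real.exp (-2 * t)) = 1 / (Real.exp t - Real.exp (-t)) := by
    have h1 : Real.exp (-t) * Real.exp t = 1 := by
      rw [← Real.exp_add]; simp
    have h2 : Real.exp (-t) * Real.exp (-t) = Real.exp (-2 * t) := by
      rw [← Real.exp_add]; ring_nf
    have h1r : (0:ℝ) < 1 - Real.exp (-2 * t) := by
      have : Real.exp (-2 * t) < 1 := by rw [Real.exp_lt_one_iff]; linarith
      linarith
    have hd : (0:ℝ) < Real.exp t - Real.exp (-t) := by linarith
    rw [div_eq_div_iff h1r.ne' hd.ne', one_mul]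
    linear_combination h1 - h2
  rw [heq]
  apply div_le_div_of_nonneg_left one_pos.le (by positivity); linarith
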